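/- Let M be a nonzero maximal subalgebra of the Lie algebra W_n with rk_A(M) < n, i.e., any n elements of M are linearly dependent over A. Then M, with the induced Lie bracket, is a simple Lie algebra (M is nonabelian and its only Lie ideals are 0 and M). -/

import Mathlib

open MvPolynomial

set_option linter.unusedSectionVars false
set_option linter.unusedVariables false
set_option maxHeartbeats 1600000

/-- `Wn K n` is the Lie algebra of all `K`-derivations of `K[x_1, …, x_n]`. -/
abbrev Wn (K : Type) [Field K] (n : ℕ) :=
  Derivation K (MvPolynomial (Fin n) K) (MvPolynomial (Fin n) K)

namespace MaxSimple
variable {K : Type} [Field K] [CharZero K] {n : ℕ}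

local notation "A" => MvPolynomial (Fin n) K
local notation "W" => Derivation K (MvPolynomial (Fin n) K) (MvPolynomial (Fin n) K)

theorem wlie_zero (m : W) : ⁅m, (0:W)⁆ = (0:W) := lie_zero m
theorem wzero_lie (m : W) : ⁅(0:W), m⁆ = (0:W) := zero_lie m
theorem wlie_add (m x y : W) : ⁅m, x + y⁆ = ⁅m, x⁆ + ⁅m, y⁆ := lie_add m x y
theorem wadd_lie (m x y : W) : ⁅x + y, m⁆ = ⁅x, m⁆ + ⁅y, m⁆ := add_lie x y m

theorem wlie_self (m : W) : ⁅m, m⁆ = (0:W) := lie_self m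

noncomputable def evX (i : Fin n) :
    W →ₗ[MvPolynomial (Fin n) K] MvPolynomial (Fin n) K where
  toFun D := D (X i)
  map_add' _ _ := rfl
  map_smul' _ _ := rfl

@[simp] theorem evX_apply (i : Fin n) (D : W) : evX i D = D (X i) := rfl

theorem lie_smul_right (D E : W) (a : A) : ⁅D, a • E⁆ = (D a) • E + a • ⁅D, E⁆ := by
  ext b
  simp only [Derivation.commutator_apply, Derivation.smul_apply, Derivation.add_apply,
    Derivation.leibniz, smul_eq_mul]
  ring

theorem lie_smul_left (D E : W) (a : A) : ⁅a • D, E⁆ = a • ⁅D, E⁆ - (E a) • D := by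
  rw [← lie_skew, lie_smul_right, ← lie_skew D E]
  module

theorem exists_ne_zero {D : W} (hD : D ≠ 0) : ∃ a : A, D a ≠ 0 := by
  by_contra h
  push_neg at h
  exact hD (Derivation.ext fun a => by simp [h a])

theorem smul_ne_zero' {a : A} {D : W} (ha : a ≠ 0) (hD : D ≠ 0) : a • D ≠ 0 := by
  obtain ⟨b, hb⟩ := exists_ne_zero hD
  intro h
  have := congrArg (fun E : W => E b) h
  simp only [Derivation.smul_apply, smul_eq_mul] at this
  exact (mul_ne_zero ha hb) this

theorem exists_sq_ne_zero {D : W} (hD : D ≠ 0) : ∃ a : A, D (D a) ≠ 0 := by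
  by_contra h
  push_neg at h
  apply hD
  have key : ∀ a : A, D a = 0 := by
    intro a
    have h2 : D (D (a * a)) = 0 := h _
    have e1 : D (a * a) = a * D a + a * D a := by
      rw [Derivation.leibniz]; simp only [smul_eq_mul]
    rw [e1, map_add] at h2
    have h3 : D (a * D a) = D a * D a + a * D (D a) := by
      rw [Derivation.leibniz]; simp only [smul_eq_mul]; ring
    rw [h3, h a] at h2
    have h4 : (2 : A) * (D a * D a) = 0 := by ring_nf; ring_nf at h2; linear_combination h2
    have h5 : D a * D a = 0 := by
      rcases mul_eq_zero.mp h4 with h' | h'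
      · exact absurd h' two_ne_zero
      · exact h'
    exact mul_self_eq_zero.mp h5
  exact Derivation.ext fun a => by simp [key a]

/-- The key lemma: under the rank and maximality hypotheses, every nonzero "ideal-like"
subset of `M` (`K`-subspace, stable under brackets with `M`) is all of `M`. -/
theorem ideal_eq_top (M : LieSubalgebra K W)
    (hmax : ∀ L : LieSubalgebra K W, M < L → L = ⊤)
    (hrk : ∀ v : Fin n → W, (∀ i, v i ∈ M) →
      ¬ LinearIndependent (MvPolynomial (Fin n) K) v)
    (hA : ∀ (a : A) {x : W}, x ∈ M → a • x ∈ M)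
    (hone : ∀ S : Set (MvPolynomial (Fin n) K),
      (∀ c q : A, q ∈ S → c * q ∈ S) →
      (∀ (i : Fin n) (q : A), q ∈ S → pderiv i q ∈ S) →
      ∀ f : A, f ∈ S → f ≠ 0 → (1 : A) ∈ S)
    (J : Set W)
    (hJM : ∀ u ∈ J, u ∈ M)
    (hJ0 : (0:W) ∈ J)
    (hJadd : ∀ u ∈ J, ∀ v ∈ J, u + v ∈ J)
    (hJsmulK : ∀ (c : K), ∀ u ∈ J, c • u ∈ J)
    (hJlie : ∀ m ∈ M, ∀ u ∈ J, ⁅m, u⁆ ∈ J)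
    (u₀ : W) (hu₀J : u₀ ∈ J) (hu₀ : u₀ ≠ 0) :
    ∀ m ∈ M, m ∈ J := by
  classical
  have hu₀M : u₀ ∈ M := hJM u₀ hu₀J
  -- J is closed under subtraction
  have hJsub : ∀ u ∈ J, ∀ v ∈ J, u - v ∈ J := by
    intro u hu v hv
    have h1 : -v ∈ J := by
      have h := hJsmulK (-1 : K) v hv
      have e : (-1 : K) • v = -v := by
        ext b; simp
      rwa [e] at h
    have := hJadd u hu _ h1
    rwa [← sub_eq_add_neg] at this
  -- B1
  have hB1 : ∀ (a : A), ∀ m ∈ M, ∀ u ∈ J, a • ⁅m, u⁆ - (u a) • m ∈ J := by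
    intro a m hm u hu
    have h := hJlie (a • m) (hA a hm) u hu
    rwa [lie_smul_left] at h
  -- S₀-elements : u₀ a • u₀ ∈ J
  have hS₀ : ∀ a : A, (u₀ a) • u₀ ∈ J := by
    intro a
    have h := hB1 a u₀ hu₀M u₀ hu₀J
    rw [wlie_self, smul_zero, zero_sub] at h
    have h2 := hJsmulK (-1 : K) _ h
    have e : (-1 : K) • -(u₀ a • u₀) = u₀ a • u₀ := by
      ext b; simp
    rwa [e] at h2
  -- γ
  have hγ : ∀ q : A, q • u₀ ∈ J → ∀ m ∈ M, (m q) • u₀ + (u₀ q) • m ∈ J := by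
    intro q hq m hm
    have hα := hJlie m hm _ hq
    rw [lie_smul_right] at hα
    have hβ := hB1 q m hm u₀ hu₀J
    have h := hJsub _ hα _ hβ
    have heq : (m q) • u₀ + q • ⁅m, u₀⁆ - (q • ⁅m, u₀⁆ - (u₀ q) • m)
        = (m q) • u₀ + (u₀ q) • m := by abel
    rwa [heq] at h
  -- δ
  have hδ : ∀ q : A, q • u₀ ∈ J → ∀ c : A, (c * u₀ q) • u₀ ∈ J := by
    intro q hq c
    have h := hγ q hq (c • u₀) (hA c hu₀M)
    have e1 : (c • u₀) q = c * u₀ q := by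
      simp [Derivation.smul_apply, smul_eq_mul]
    rw [e1] at h
    have e2 : (u₀ q) • (c • u₀) = (u₀ q * c) • u₀ := smul_smul _ _ _
    rw [e2, mul_comm (u₀ q) c, ← add_smul] at h
    have e3 : (c * u₀ q + c * u₀ q) • u₀ = ((2:A) * (c * u₀ q)) • u₀ := by
      rw [two_mul]
    rw [e3] at h
    have e4 : ((2:A) * (c * u₀ q)) • u₀ = (2:K) • ((c * u₀ q) • u₀) := by
      rw [mul_smul, ← algebraMap_smul (MvPolynomial (Fin n) K) (2:K)
        ((c * u₀ q) • u₀), map_ofNat]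
    rw [e4] at h
    have h2 := hJsmulK (2⁻¹ : K) _ h
    rw [smul_smul] at h2
    norm_num at h2
    exact h2
  -- the tilde predicate: elements all of whose A-multiples lie in J
  set tilde : W → Prop := fun w => w ∈ M ∧ ∀ c : A, c • w ∈ J with htilde
  have htlie : ∀ m ∈ M, ∀ w, tilde w → tilde ⁅m, w⁆ := by
    intro m hm w ⟨hwM, hwA⟩
    refine ⟨M.lie_mem hm hwM, fun a => ?_⟩
    have h1 := hJlie m hm _ (hwA a)
    rw [lie_smul_right] at h1
    have h2 := hJsub _ h1 _ (hwA (m a))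
    have heq : (m a) • w + a • ⁅m, w⁆ - (m a) • w = a • ⁅m, w⁆ := by abel
    rwa [heq] at h2
  have hB4 : ∀ w, tilde w → ∀ (a : A), ∀ m ∈ M, (w a) • m ∈ J := by
    intro w hw a m hm
    have hwJ : w ∈ J := by
      have := hw.2 1
      rwa [one_smul] at this
    have h1 := hB1 a m hm w hwJ
    have h2 : a • ⁅m, w⁆ ∈ J := (htlie m hm w hw).2 a
    have h3 := hJsub _ h2 _ h1
    have heq : a • ⁅m, w⁆ - (a • ⁅m, w⁆ - (w a) • m) = (w a) • m := by abel
    rwa [heq] at h3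
  -- construct a nonzero tilde element
  obtain ⟨a₀, ha₀⟩ := exists_sq_ne_zero hu₀
  set w₀ : W := (u₀ (u₀ a₀)) • u₀ with hw₀
  have hw₀t : tilde w₀ := by
    refine ⟨hA _ hu₀M, fun c => ?_⟩
    rw [hw₀, smul_smul]
    exact hδ (u₀ a₀) (hS₀ a₀) c
  have hw₀ne : w₀ ≠ 0 := smul_ne_zero' ha₀ hu₀
  -- the multiplier set S
  set S : Set (MvPolynomial (Fin n) K) := {q | ∀ m ∈ M, q • m ∈ J} with hS
  have hSmul : ∀ c q : A, q ∈ S → c * q ∈ S := by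
    intro c q hq m hm
    rw [mul_comm, mul_smul]
    exact hq _ (hA c hm)
  have hSadd : ∀ p q : A, p ∈ S → q ∈ S → p + q ∈ S := by
    intro p q hp hq m hm
    rw [add_smul]
    exact hJadd _ (hp m hm) _ (hq m hm)
  have hS0 : (0 : A) ∈ S := by
    intro m hm
    rw [zero_smul]
    exact hJ0
  have hSsub : ∀ p q : A, p ∈ S → q ∈ S → p - q ∈ S := by
    intro p q hp hq
    have := hSadd p _ hp (hSmul (-1) q hq)
    rwa [neg_one_mul, ← sub_eq_add_neg] at this
  have hSw₀ : ∀ a : A, w₀ a ∈ S := fun a m hm => hB4 w₀ hw₀t a m hm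
  obtain ⟨a₁, ha₁⟩ := exists_ne_zero hw₀ne
  -- the stabilizing subalgebra T
  have hTsm : ∀ (c : K) (D : W), (∀ q ∈ S, D q ∈ S) → ∀ q ∈ S, (c • D) q ∈ S := by
    intro c D hD q hq
    have : (c • D) q = C c * D q := by
      rw [Derivation.smul_apply, smul_eq_C_mul]
    rw [this]
    exact hSmul _ _ (hD q hq)
  let Tm : Submodule K W :=
    { carrier := {D : W | ∀ q ∈ S, D q ∈ S}
      add_mem' := by
        intro D E hD hE q hq
        have : (D + E) q = D q + E q := rfl
        rw [this]
        exact hSadd _ _ (hD q hq) (hE q hq)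
      zero_mem' := by
        intro q hq
        have : (0 : W) q = 0 := rfl
        rw [this]
        exact hS0
      smul_mem' := fun c D hD => hTsm c D hD }
  let T : LieSubalgebra K W :=
    { toSubmodule := Tm
      lie_mem' := by
        intro D E hD hE q hq
        have : ⁅D, E⁆ q = D (E q) - E (D q) := rfl
        rw [this]
        exact hSsub _ _ (hD _ (hE q hq)) (hE _ (hD q hq)) }
  have hMT : M ≤ T := by
    intro m hm q hq m' hm'
    have h1 := hJlie m hm _ (hq m' hm')
    rw [lie_smul_right] at h1
    have h2 := hJsub _ h1 _ (hq _ (M.lie_mem hm hm'))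
    have heq : (m q) • m' + q • ⁅m, m'⁆ - q • ⁅m, m'⁆ = (m q) • m' := by abel
    rwa [heq] at h2
  rcases eq_or_lt_of_le hMT with heq | hlt
  · -- T = M forces a rank contradiction
    exfalso
    set f := w₀ a₁ with hf
    have hfS : f ∈ S := hSw₀ a₁
    have hf0 : f ≠ 0 := ha₁
    set v : Fin n → W := fun j => f • pderiv j with hv
    have hvT : ∀ j, v j ∈ T := by
      intro j q hq
      have : (v j) q = (pderiv j q) * f := by
        rw [hv]
        simp only [Derivation.smul_apply, smul_eq_mul]
        ring
      rw [this]
      exact hSmul _ _ hfS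
    have hvM : ∀ j, v j ∈ M := by
      intro j
      rw [heq]
      exact hvT j
    apply hrk v hvM
    rw [Fintype.linearIndependent_iff]
    intro g hg i
    classical
    have h := congrArg (evX i) hg
    rw [map_sum, map_zero] at h
    have he : ∀ j, evX i (g j • v j) = g j * (f * pderiv j (X i)) := by
      intro j
      rw [map_smul, smul_eq_mul]
      congr 1
    rw [Finset.sum_congr rfl (fun j _ => he j)] at h
    rw [Finset.sum_eq_single i (fun j _ hji => by
        rw [pderiv_X_of_ne (Ne.symm hji), mul_zero, mul_zero])
      (fun hi => absurd (Finset.mem_univ i) hi)] at h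
    rw [pderiv_X_self, mul_one] at h
    rcases mul_eq_zero.mp h with h' | h'
    · exact h'
    · exact absurd h' hf0
  · have htop := hmax T hlt
    have hpdS : ∀ (i : Fin n) (q : A), q ∈ S → pderiv i q ∈ S := by
      intro i q hq
      have hmem : pderiv i ∈ T := by
        rw [htop]
        exact LieSubalgebra.mem_top _
      exact hmem q hq
    have h1S := hone S hSmul hpdS (w₀ a₁) (hSw₀ a₁) ha₁
    intro m hm
    have := h1S m hm
    rwa [one_smul] at this


theorem pderiv_as_sum (f : A) (i : Fin n) :
    pderiv i f = ∑ t ∈ f.support,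
      monomial (t - Finsupp.single i 1) (coeff t f * (t i : K)) := by
  classical
  conv_lhs => rw [f.as_sum]
  rw [map_sum]
  refine Finset.sum_congr rfl fun t _ => ?_
  rw [pderiv_monomial]

theorem sum_sub_single {t : Fin n →₀ ℕ} {i : Fin n} (hti : t i ≠ 0) :
    ((t - Finsupp.single i 1).sum fun _ e => e) + 1 = t.sum fun _ e => e := by
  classical
  have hle : Finsupp.single i 1 ≤ t := by
    rw [Finsupp.single_le_iff]
    omega
  have ht : (t - Finsupp.single i 1) + Finsupp.single i 1 = t := tsub_add_cancel_of_le hle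
  conv_rhs => rw [← ht]
  rw [Finsupp.sum_add_index' (fun _ => rfl) (fun _ _ _ => rfl)]
  simp [Finsupp.sum_single_index]

theorem totalDegree_pderiv_lt {f : A} (hf : f.totalDegree ≠ 0) (i : Fin n) :
    (pderiv i f).totalDegree < f.totalDegree := by
  classical
  rw [pderiv_as_sum]
  refine lt_of_le_of_lt (totalDegree_finset_sum _ _) ?_
  rw [Finset.sup_lt_iff (by simpa using Nat.pos_of_ne_zero hf : (⊥:ℕ) < f.totalDegree)]
  intro t ht
  by_cases hti : t i = 0
  · simp only [hti, Nat.cast_zero, mul_zero]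
    rw [map_zero (monomial _), totalDegree_zero]
    omega
  · refine lt_of_le_of_lt (totalDegree_monomial_le _ _) ?_
    show ((t - Finsupp.single i 1).sum fun _ e => e) < f.totalDegree
    have h1 := sum_sub_single (t := t) (i := i) hti
    have h2 : (t.sum fun _ e => e) ≤ f.totalDegree :=
      Finset.le_sup (f := fun s => s.sum fun _ e => e) ht
    omega

theorem pderiv_ne_zero_of {f : A} {t : Fin n →₀ ℕ} (htf : t ∈ f.support) {i : Fin n}
    (hti : t i ≠ 0) : pderiv i f ≠ 0 := by
  classical
  intro h
  have hco : coeff (t - Finsupp.single i 1) (pderiv i f) = coeff t f * (t i : K) := by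
    rw [pderiv_as_sum, coeff_sum]
    rw [Finset.sum_eq_single t]
    · rw [coeff_monomial, if_pos rfl]
    · intro s hs hst
      rw [coeff_monomial]
      by_cases hsi : s i = 0
      · simp [hsi]
      · rw [if_neg]
        intro hEq
        apply hst
        have hs' : Finsupp.single i 1 ≤ s := by rw [Finsupp.single_le_iff]; omega
        have ht' : Finsupp.single i 1 ≤ t := by rw [Finsupp.single_le_iff]; omega
        have := congrArg (· + Finsupp.single i 1) hEq
        simpa [tsub_add_cancel_of_le hs', tsub_add_cancel_of_le ht'] using this
    · intro h'; exact absurd htf h'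
  rw [h] at hco
  simp only [coeff_zero] at hco
  have h1 : coeff t f ≠ 0 := (mem_support_iff).mp htf
  have h2 : ((t i : K)) ≠ 0 := Nat.cast_ne_zero.mpr hti
  exact (mul_ne_zero h1 h2) hco.symm

theorem eq_C_of_totalDegree_eq_zero {f : A} (hf : f.totalDegree = 0) :
    f = C (coeff 0 f) := by
  classical
  ext m
  by_cases hm : m = 0
  · subst hm; simp
  · rw [coeff_C, if_neg (Ne.symm hm)]
    by_contra h
    have hms : m ∈ f.support := mem_support_iff.mpr h
    have h0 : ∀ (s : Fin n →₀ ℕ), s ∈ f.support → ∀ x, s x = 0 :=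
      (totalDegree_eq_zero_iff (Fin n) f).mp hf
    exact hm (Finsupp.ext fun x => h0 m hms x)

/-- a nonzero ideal-like subset of `A` closed under all partial derivatives contains 1 -/
theorem one_mem_of_pderiv_closed (S : Set (MvPolynomial (Fin n) K))
    (hmul : ∀ c q : A, q ∈ S → c * q ∈ S)
    (hpd : ∀ (i : Fin n) (q : A), q ∈ S → pderiv i q ∈ S) :
    ∀ f : A, f ∈ S → f ≠ 0 → (1 : A) ∈ S := by
  classical
  have aux : ∀ d : ℕ, ∀ f : A, f ∈ S → f ≠ 0 → f.totalDegree ≤ d → (1 : A) ∈ S := by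
    intro d
    induction d with
    | zero =>
      intro f hfS hf0 hdeg
      have h0 : f.totalDegree = 0 := Nat.le_zero.mp hdeg
      set c := coeff 0 f with hc
      have hC := eq_C_of_totalDegree_eq_zero h0
      rw [← hc] at hC
      have hc0 : c ≠ 0 := fun h => hf0 (by rw [hC, h, map_zero])
      have h1 : (1 : A) = C c⁻¹ * f := by
        rw [hC, ← map_mul, inv_mul_cancel₀ hc0, map_one]
      rw [h1]
      exact hmul _ _ hfS
    | succ d ih =>
      intro f hfS hf0 hdeg
      by_cases h0 : f.totalDegree = 0
      · set c := coeff 0 f with hc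
        have hC := eq_C_of_totalDegree_eq_zero h0
        rw [← hc] at hC
        have hc0 : c ≠ 0 := fun h => hf0 (by rw [hC, h, map_zero])
        have h1 : (1 : A) = C c⁻¹ * f := by
          rw [hC, ← map_mul, inv_mul_cancel₀ hc0, map_one]
        rw [h1]
        exact hmul _ _ hfS
      · -- find a variable occurring in f
        obtain ⟨t, ht, i, hi⟩ : ∃ t ∈ f.support, ∃ i, t i ≠ 0 := by
          by_contra h
          push_neg at h
          exact h0 ((totalDegree_eq_zero_iff (Fin n) f).mpr h)
        have hpdne := pderiv_ne_zero_of ht hi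
        have hlt := totalDegree_pderiv_lt h0 i
        exact ih (pderiv i f) (hpd i f hfS) hpdne (by omega)
  exact fun f hf h0 => aux f.totalDegree f hf h0 le_rfl

theorem exists_indep (s : Set W)
    (hsp : ∀ w : W, w ∈ Submodule.span (MvPolynomial (Fin n) K) s) :
    ∃ v : Fin n → W, (∀ i, v i ∈ s) ∧ LinearIndependent (MvPolynomial (Fin n) K) v := by
  classical
  set κ : W → (Fin n → K) := fun w i => constantCoeff (w (X i)) with hκ
  have hspan : ∀ w : W, κ w ∈ Submodule.span K (κ '' s) := by
    intro w
    refine Submodule.span_induction (p := fun x _ => κ x ∈ Submodule.span K (κ '' s))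
      (fun x hx => Submodule.subset_span ⟨x, hx, rfl⟩) ?_ ?_ ?_ (hsp w)
    · show κ (0 : W) ∈ _
      have : κ 0 = 0 := by funext i; simp [hκ]
      rw [this]; exact Submodule.zero_mem _
    · intro x y _ _ hx hy
      show κ (x + y) ∈ _
      have : κ (x + y) = κ x + κ y := by funext i; simp [hκ]
      rw [this]; exact Submodule.add_mem _ hx hy
    · intro a x _ hx
      show κ (a • x) ∈ _
      have : κ (a • x) = constantCoeff a • κ x := by
        funext i; simp [hκ, Derivation.smul_apply, smul_eq_mul]
      rw [this]; exact Submodule.smul_mem _ _ hx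
  have hbasisvec : ∀ i : Fin n, κ (pderiv i) = fun j => if i = j then 1 else 0 := by
    intro i; funext j
    by_cases h : i = j
    · subst h; simp [hκ]
    · simp [hκ, pderiv_X_of_ne (Ne.symm h), h]
  have htop : Submodule.span K (κ '' s) = ⊤ := by
    rw [eq_top_iff]
    intro x _
    have hx : x = ∑ i : Fin n, x i • fun j => if i = j then (1:K) else 0 := pi_eq_sum_univ x
    rw [hx]
    refine Submodule.sum_mem _ fun i _ => Submodule.smul_mem _ _ ?_
    rw [← hbasisvec i]
    exact hspan (pderiv i)
  obtain ⟨b, hbs, hbspan, hbli⟩ := exists_linearIndependent K (κ '' s)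
  rw [htop] at hbspan
  let bas : Module.Basis b K (Fin n → K) := Module.Basis.mk hbli (by rw [Subtype.range_val, hbspan])
  haveI : Fintype b := FiniteDimensional.fintypeBasisIndex bas
  have hcard : Fintype.card b = n := by
    have h1 := Module.finrank_eq_card_basis bas
    rw [Module.finrank_fintype_fun_eq_card] at h1
    simp only [Fintype.card_fin] at h1; omega
  let e : Fin n ≃ b := (Fintype.equivFinOfCardEq hcard).symm
  have hchoice : ∀ y : b, ∃ w : W, w ∈ s ∧ κ w = (y : Fin n → K) := by
    intro y
    obtain ⟨w, hw, hw2⟩ := hbs y.2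
    exact ⟨w, hw, hw2⟩
  choose u hu1 hu2 using hchoice
  set v : Fin n → W := fun k => u (e k) with hv
  refine ⟨v, fun k => hu1 (e k), ?_⟩
  set Φ : Matrix (Fin n) (Fin n) (MvPolynomial (Fin n) K) := fun i k => (v k) (X i) with hΦ
  have hmap : Φ.map (constantCoeff) = fun i k => κ (v k) i := by
    funext i k; simp [Matrix.map, hΦ, hκ]
  have hdetK : (Φ.map (constantCoeff (R := K))).det ≠ 0 := by
    intro hdet
    obtain ⟨c, hc0, hcv⟩ := (Matrix.exists_mulVec_eq_zero_iff).mpr hdet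
    have hli : LinearIndependent K (fun k : Fin n => κ (v k)) := by
      have : (fun k : Fin n => κ (v k)) = (fun y : b => (y : Fin n → K)) ∘ e := by
        funext k; simp [hv, hu2]
      rw [this]
      exact hbli.comp e e.injective
    have := Fintype.linearIndependent_iff.mp hli c ?_
    · exact hc0 (funext this)
    · funext i
      have := congrFun hcv i
      simpa [Matrix.mulVec, dotProduct, hmap, Finset.sum_apply, mul_comm] using this
  have hdetA : Φ.det ≠ 0 := by
    intro h
    exact hdetK (by rw [← RingHom.mapMatrix_apply, ← RingHom.map_det, h, map_zero])
  rw [Fintype.linearIndependent_iff]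
  intro g hg i
  have hmv : Φ.mulVec g = 0 := by
    funext i
    have := congrArg (evX i) hg
    simpa [map_sum, Matrix.mulVec, dotProduct, hΦ, mul_comm] using this
  by_contra hgi
  have : ∃ c ≠ 0, Φ.mulVec c = 0 := ⟨g, fun h => hgi (by rw [h]; rfl), hmv⟩
  exact hdetA (Matrix.exists_mulVec_eq_zero_iff.mp this)

theorem smul_mem_of_max (M : LieSubalgebra K W)
    (hmax : ∀ L : LieSubalgebra K W, M < L → L = ⊤)
    (hrk : ∀ v : Fin n → W, (∀ i, v i ∈ M) →
      ¬ LinearIndependent (MvPolynomial (Fin n) K) v)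
    (hind : ∀ s : Set W, (∀ w : W, w ∈ Submodule.span (MvPolynomial (Fin n) K) s) →
      ∃ v : Fin n → W, (∀ i, v i ∈ s) ∧ LinearIndependent (MvPolynomial (Fin n) K) v) :
    ∀ (a : A) {x : W}, x ∈ M → a • x ∈ M := by
  classical
  set s : Set W := (M : Set W) with hs
  set Sm : Submodule (MvPolynomial (Fin n) K) W := Submodule.span (MvPolynomial (Fin n) K) s
    with hSm
  have hbr1 : ∀ m ∈ s, ∀ y ∈ Sm, ⁅m, y⁆ ∈ Sm := by
    intro m hm y hy
    refine Submodule.span_induction (p := fun y _ => ⁅m, y⁆ ∈ Sm)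
      (fun x hx => Submodule.subset_span (M.lie_mem hm hx)) ?_ ?_ ?_ hy
    · show ⁅m, (0:W)⁆ ∈ Sm
      rw [wlie_zero]; exact Submodule.zero_mem _
    · intro x y _ _ hx hy
      show ⁅m, x + y⁆ ∈ Sm
      rw [wlie_add]; exact Submodule.add_mem _ hx hy
    · intro a x hxmem hx
      show ⁅m, a • x⁆ ∈ Sm
      rw [lie_smul_right]
      exact Submodule.add_mem _ (Submodule.smul_mem _ _ hxmem) (Submodule.smul_mem _ _ hx)
  have hbr : ∀ x ∈ Sm, ∀ y ∈ Sm, ⁅x, y⁆ ∈ Sm := by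
    intro x hx
    refine Submodule.span_induction (p := fun x _ => ∀ y ∈ Sm, ⁅x, y⁆ ∈ Sm)
      (fun m hm => hbr1 m hm) ?_ ?_ ?_ hx
    · intro y hy; show ⁅(0:W), y⁆ ∈ Sm; rw [wzero_lie]; exact Submodule.zero_mem _
    · intro x y _ _ hx hy z hz
      show ⁅x + y, z⁆ ∈ Sm
      rw [wadd_lie]; exact Submodule.add_mem _ (hx z hz) (hy z hz)
    · intro a x hxmem hx y hy
      show ⁅a • x, y⁆ ∈ Sm
      rw [lie_smul_left]
      exact Submodule.sub_mem _ (Submodule.smul_mem _ _ (hx y hy))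
        (Submodule.smul_mem _ _ hxmem)
  let L1 : LieSubalgebra K W :=
    { toSubmodule := Sm.restrictScalars K
      lie_mem' := fun {x y} hx hy => hbr x hx y hy }
  have hML : M ≤ L1 := fun x hx => Submodule.subset_span hx
  rcases eq_or_lt_of_le hML with heq | hlt
  · intro a x hx
    have : a • x ∈ Sm := Submodule.smul_mem _ _ (Submodule.subset_span hx)
    rw [heq]
    exact this
  · exfalso
    have htop := hmax L1 hlt
    have hsp : ∀ w : W, w ∈ Submodule.span (MvPolynomial (Fin n) K) s := by
      intro w
      have : w ∈ L1 := htop ▸ LieSubalgebra.mem_top w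
      exact this
    obtain ⟨v, hv1, hv2⟩ := hind s hsp
    exact hrk v hv1 hv2


theorem main (M : LieSubalgebra K W)
    (hM0 : M ≠ ⊥)
    (hmax : ∀ L : LieSubalgebra K W, M < L → L = ⊤)
    (hrk : ∀ v : Fin n → W, (∀ i, v i ∈ M) →
      ¬ LinearIndependent (MvPolynomial (Fin n) K) v) :
    LieAlgebra.IsSimple K M := by
  classical
  have hA : ∀ (a : A) {x : W}, x ∈ M → a • x ∈ M :=
    smul_mem_of_max M hmax hrk (fun s hs => exists_indep s hs)
  constructor
  · -- every ideal is ⊥ or ⊤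
    intro I
    by_cases hI : I = ⊥
    · exact Or.inl hI
    right
    have hex : ∃ x : ↥M, x ∈ I ∧ x ≠ 0 := by
      by_contra h
      push_neg at h
      exact hI ((LieSubmodule.eq_bot_iff I).mpr h)
    obtain ⟨x, hxI, hx0⟩ := hex
    set J : Set W := {w | ∃ h : w ∈ M, (⟨w, h⟩ : ↥M) ∈ I} with hJ
    have hJM : ∀ u ∈ J, u ∈ M := by
      intro u hu
      obtain ⟨h, _⟩ := hu
      exact h
    have h0M : (0:W) ∈ M := M.zero_mem'
    have hJ0 : (0:W) ∈ J := by
      refine ⟨h0M, ?_⟩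
      have e : (⟨(0:W), h0M⟩ : ↥M) = 0 := Subtype.ext rfl
      rw [e]
      exact I.zero_mem'
    have hJadd : ∀ u ∈ J, ∀ v ∈ J, u + v ∈ J := by
      intro u hu v hv
      obtain ⟨hu1, hu2⟩ := hu
      obtain ⟨hv1, hv2⟩ := hv
      refine ⟨M.add_mem' hu1 hv1, ?_⟩
      have e : (⟨u + v, M.add_mem' hu1 hv1⟩ : ↥M) = ⟨u, hu1⟩ + ⟨v, hv1⟩ := Subtype.ext rfl
      rw [e]
      exact I.add_mem' hu2 hv2
    have hJsmulK : ∀ (c : K), ∀ u ∈ J, c • u ∈ J := by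
      intro c u hu
      obtain ⟨hu1, hu2⟩ := hu
      refine ⟨M.smul_mem' c hu1, ?_⟩
      have e : (⟨c • u, M.smul_mem' c hu1⟩ : ↥M) = c • ⟨u, hu1⟩ := Subtype.ext rfl
      rw [e]
      exact I.smul_mem' c hu2
    have hJlie : ∀ m ∈ M, ∀ u ∈ J, ⁅m, u⁆ ∈ J := by
      intro m hm u hu
      obtain ⟨hu1, hu2⟩ := hu
      refine ⟨M.lie_mem hm hu1, ?_⟩
      have e : (⟨⁅m, u⁆, M.lie_mem hm hu1⟩ : ↥M) = ⁅(⟨m, hm⟩ : ↥M), (⟨u, hu1⟩ : ↥M)⁆ :=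
        Subtype.ext rfl
      rw [e]
      exact I.lie_mem hu2
    have hu₀J : (x : W) ∈ J := ⟨x.2, hxI⟩
    have hu₀ne : (x : W) ≠ 0 := fun h => hx0 (Subtype.ext h)
    have hfull := ideal_eq_top M hmax hrk (fun a x hx => hA a hx)
      (fun S h1 h2 f h3 h4 => one_mem_of_pderiv_closed S h1 h2 f h3 h4)
      J hJM hJ0 hJadd hJsmulK hJlie (x : W) hu₀J hu₀ne
    rw [eq_top_iff]
    intro y _
    obtain ⟨hyM, hyI⟩ := hfull (y : W) y.2
    have e : (⟨(y : W), hyM⟩ : ↥M) = y := Subtype.ext rfl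
    rwa [e] at hyI
  · -- non-abelian
    intro hab
    obtain ⟨m, hm, hm0⟩ : ∃ m : W, m ∈ M ∧ m ≠ 0 := by
      by_contra h
      push_neg at h
      exact hM0 ((LieSubalgebra.eq_bot_iff M).mpr fun x hx => h x hx)
    obtain ⟨b, hb⟩ := exists_ne_zero hm0
    have h : (⁅(⟨m, hm⟩ : ↥M), (⟨b • m, hA b hm⟩ : ↥M)⁆ : ↥M) = 0 :=
      trivial_lie_zero _ _ _ _
    have h2 : ⁅m, b • m⁆ = (0:W) := congrArg Subtype.val h
    rw [lie_smul_right, wlie_self, smul_zero, add_zero] at h2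
    exact smul_ne_zero' hb hm0 h2

end MaxSimple

/-- Every nonzero maximal Lie subalgebra of `Wn` of rank `< n` over `A = K[x_1,…,x_n]`
(i.e. any `n` of its elements are `A`-linearly dependent) is a simple Lie algebra. -/
theorem maximal_subalgebra_rank_lt_isSimple
    {K : Type} [Field K] [IsAlgClosed K] [CharZero K] {n : ℕ}
    (M : LieSubalgebra K (Wn K n))
    (hM0 : M ≠ ⊥) (hMtop : M ≠ ⊤)
    (hmax : ∀ L : LieSubalgebra K (Wn K n), M < L → L = ⊤)
    (hrk : ∀ v : Fin n → Wn K n, (∀ i, v i ∈ M) →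
      ¬ LinearIndependent (MvPolynomial (Fin n) K) v) :
    LieAlgebra.IsSimple K M :=
  MaxSimple.main M hM0 hmax hrk
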